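/- For h ≥ 0 and 0 ≤ c < 1/2, the function K(z) = −c√(h² + (1−h²)z²)/√(z⁴ + h²c²) satisfies the condition z² + K(z)² < 1 if and only if z⁴ + c² < z², equivalently c² < z²(1−z²). -/
import Mathlib


open Real

/-- For h ≥ 0, 0 ≤ c < 1/2 and z ∈ (0,1), the function
K(z) = −c√(h² + (1−h²)z²)/√(z⁴ + h²c²) satisfies z² + K(z)² < 1 iff z⁴ + c² < z²,
equivalently iff c² < z²(1−z²). -/
theorem minimal_helicoidal_momentum_condition
    (h c z : ℝ) (hh : 0 ≤ h) (hc : 0 ≤ c) (hc' : c < 1/2)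
    (hz : z ∈ Set.Ioo (0:ℝ) 1)
    (K : ℝ)
    (hKdef : K = -c * Real.sqrt (h^2 + (1 - h^2) * z^2) / Real.sqrt (z^4 + h^2 * c^2)) :
    (z^2 + K^2 < 1 ↔ z^4 + c^2 < z^2) ∧ (z^4 + c^2 < z^2 ↔ c^2 < z^2 * (1 - z^2)) := by
  obtain ⟨hz0, hz1⟩ := hz
  have hz2 : z^2 ≤ 1 := by nlinarith
  have hA : 0 ≤ h^2 + (1 - h^2) * z^2 := by
    nlinarith [mul_nonneg (sq_nonneg h) (sub_nonneg.2 hz2), sq_nonneg z]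
  have hD : 0 < z^4 + h^2 * c^2 := by
    have h4 : 0 < z^4 := by positivity
    nlinarith [sq_nonneg (h*c)]
  have hK2 : K^2 = c^2 * (h^2 + (1 - h^2) * z^2) / (z^4 + h^2 * c^2) := by
    rw [hKdef, div_pow, mul_pow, Real.sq_sqrt hA, Real.sq_sqrt hD.le, neg_pow]
    ring
  have key : K^2 * (z^4 + h^2 * c^2) = c^2 * (h^2 + (1 - h^2) * z^2) := by
    rw [hK2, div_mul_cancel₀ _ hD.ne']
  constructor
  · constructor
    · intro H
      have h1 : K^2 < 1 - z^2 := by linarith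
      have h2 : K^2 * (z^4 + h^2 * c^2) < (1 - z^2) * (z^4 + h^2 * c^2) :=
        mul_lt_mul_of_pos_right h1 hD
      rw [key] at h2
      nlinarith [mul_pos hz0 hz0, sq_nonneg z]
    · intro H
      have h2 : c^2 * (h^2 + (1 - h^2) * z^2) < (1 - z^2) * (z^4 + h^2 * c^2) := by
        nlinarith [mul_pos hz0 hz0]
      rw [← key] at h2
      have h3 : K^2 < 1 - z^2 := lt_of_mul_lt_mul_right (by linarith) hD.le
      linarith
  · constructor <;> intro H <;> nlinarith
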